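/- Let A be a C*-algebra with GNS triple (ℋ_ψ, π_ψ, |ψ⟩) for a state ψ, and let F be a *-preserving derivation on a dense *-subalgebra D with F(D) ⊆ D and ψ(F(a)) = 0 for all a ∈ D. Then the assignment F̂(π_ψ(a)|ψ⟩) := π_ψ(F(a))|ψ⟩ gives a well-defined linear operator on the subspace D_ψ := π_ψ(D)|ψ⟩, which satisfies F̂|ψ⟩ = 0 and the commutation relation F̂ π_ψ(b) v − π_ψ(b) F̂ v = π_ψ(F(b)) v for all b ∈ D and v ∈ D_ψ. Moreover if F is anti-self-adjoint (F(a*) = F(a)*, ψ(F(a)) = 0 ∀a, and ψ(F(a)·b) = −ψ(a·F(b)) follows) then F̂ is skew-symmetric on D_ψ: ⟨F̂u, v⟩ = −⟨u, F̂v⟩. -/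

import Mathlib

open scoped ComplexOrder

/-- In the GNS representation (ℋ, π, ξ) of a state ψ, a derivation F on a dense
*-subalgebra D that does not excite ψ induces a well-defined operator
F̂(π(a)ξ) := π(F(a))ξ on D_ψ = π(D)ξ, which annihilates ξ, satisfies the
commutation relation F̂π(b)v − π(b)F̂v = π(F(b))v on D_ψ, and is skew-symmetric. -/
theorem gns_derivation_operator
    {A : Type*} [NormedRing A] [StarRing A] [CStarRing A]
    [NormedAlgebra ℂ A] [StarModule ℂ A] [CompleteSpace A]
    {H : Type*} [NormedAddCommGroup H] [InnerProductSpace ℂ H] [CompleteSpace H]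
    (ψ : A →ₗ[ℂ] ℂ)
    (hψpos : ∀ a : A, 0 ≤ ψ (star a * a))
    (hψone : ψ 1 = 1)
    (π : A →⋆ₐ[ℂ] (H →L[ℂ] H)) (ξ : H)
    (hcyclic : Dense (Set.range fun a : A => π a ξ))
    (hGNS : ∀ a : A, ψ a = inner ℂ ξ (π a ξ))
    (D : StarSubalgebra ℂ A) (hdense : Dense (D : Set A))
    (F : A →ₗ[ℂ] A)
    (hleibniz : ∀ a ∈ D, ∀ b ∈ D, F (a * b) = F a * b + a * F b)
    (hstar : ∀ a ∈ D, F (star a) = star (F a))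
    (hinv : ∀ a ∈ D, F a ∈ D)
    (hnoexcite : ∀ a ∈ D, ψ (F a) = 0) :
    -- well-definedness of F̂ on D_ψ
    (∀ a ∈ D, ∀ a' ∈ D, π a ξ = π a' ξ → π (F a) ξ = π (F a') ξ) ∧
    -- F̂ annihilates the GNS vector ξ = π(1)ξ
    π (F 1) ξ = 0 ∧
    -- commutation relation F̂ π(b) v − π(b) F̂ v = π(F(b)) v for v = π(a)ξ
    (∀ a ∈ D, ∀ b ∈ D,
      π (F (b * a)) ξ - π b (π (F a) ξ) = π (F b) (π a ξ)) ∧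
    -- skew-symmetry of F̂ on D_ψ
    (∀ a ∈ D, ∀ b ∈ D,
      (inner ℂ (π (F a) ξ) (π b ξ) : ℂ) = - inner ℂ (π a ξ) (π (F b) ξ)) := by
  have key : ∀ a b : A, (inner ℂ (π a ξ) (π b ξ) : ℂ) = ψ (star a * b) := by
    intro a b
    rw [hGNS, map_mul, map_star, ContinuousLinearMap.star_eq_adjoint,
      ContinuousLinearMap.mul_apply, ContinuousLinearMap.adjoint_inner_right]
  refine ⟨?_, ?_, ?_, ?_⟩
  · intro a ha a' ha' heq
    set c := a - a' with hc
    have hcD : c ∈ D := D.sub_mem ha ha'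
    have hcz : π c ξ = 0 := by
      rw [hc, map_sub, ContinuousLinearMap.sub_apply, heq, sub_self]
    have h0 : ∀ b : A, ψ (star c * b) = 0 := by
      intro b; rw [← key, hcz, inner_zero_left]
    have hFc : ψ (star (F c) * F c) = 0 := by
      have h1 := hleibniz (star c) (star_mem hcD) (F c) (hinv c hcD)
      have h2 := hnoexcite (star c * F c) (mul_mem (star_mem hcD) (hinv c hcD))
      rw [h1, map_add, hstar c hcD] at h2
      have h3 := h0 (F (F c))
      linear_combination h2 - h3
    have : π (F c) ξ = 0 := by
      rw [← inner_self_eq_zero (𝕜 := ℂ), key, hFc]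
    rw [hc, map_sub, map_sub, ContinuousLinearMap.sub_apply, sub_eq_zero] at this
    exact this
  · have h1 := hleibniz 1 D.one_mem 1 D.one_mem
    rw [one_mul, mul_one, one_mul] at h1
    have : F 1 = 0 := by
      have := left_eq_add.mp h1
      simpa using this
    rw [this, map_zero]; rfl
  · intro a ha b hb
    rw [hleibniz b hb a ha, map_add, map_mul, map_mul,
      ContinuousLinearMap.add_apply, ContinuousLinearMap.mul_apply,
      ContinuousLinearMap.mul_apply]
    abel
  · intro a ha b hb
    rw [key, key]
    have h1 := hleibniz (star a) (star_mem ha) b hb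
    have h2 := hnoexcite (star a * b) (mul_mem (star_mem ha) hb)
    rw [h1, map_add, hstar a ha] at h2
    linear_combination h2
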